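/- (Existence of maximal specieslike clusters with the common ancestor and reflection properties) Let G be an infinite biosphere. For every vertex v of G, there is an IAP ∩ CONV ∩ CA ∩ REF-maximal set containing v. -/

import Mathlib

/-- An infinite biosphere: a directed graph on vertex type `V` with a
birthdate function `t`, such that parents are born before children, only
finitely many organisms are born before any given time, every vertex has
finitely many children, and the vertex set is infinite. -/
structure InfiniteBiosphere (V : Type) where
  Edge : V → V → Prop
  t : V → ℝ
  edge_t : ∀ v w : V, Edge v w → t v < t w
  finite_early : ∀ r : ℝ, {v : V | t v < r}.Finite
  finite_children : ∀ v : V, {w : V | Edge v w}.Finite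
  infinite_verts : Infinite V

namespace InfiniteBiosphere

variable {V : Type}

/-- `v` is an ancestor of `w`: there is a directed path of length ≥ 1 from `v` to `w`. -/
def Ancestor (G : InfiniteBiosphere V) (v w : V) : Prop :=
  Relation.TransGen G.Edge v w

/-- The identical ancestor point axiom: for every `v ∈ S`, either all but
finitely many members of `S` are descendants of `v`, or all but finitely many
members of `S` are non-descendants of `v`. -/
def IAP (G : InfiniteBiosphere V) (S : Set V) : Prop :=
  ∀ v ∈ S, {w ∈ S | ¬ G.Ancestor v w}.Finite ∨ {w ∈ S | G.Ancestor v w}.Finite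

/-- The convexity axiom: any vertex with an ancestor in `S` and a descendant in `S` is in `S`. -/
def Convex (G : InfiniteBiosphere V) (S : Set V) : Prop :=
  ∀ v : V, (∃ a ∈ S, G.Ancestor a v) → (∃ d ∈ S, G.Ancestor v d) → v ∈ S

/-- `v` is a generator of `S`: `v ∈ S` and `S` contains at most finitely many
non-descendants of `v`. -/
def IsGenerator (G : InfiniteBiosphere V) (S : Set V) (v : V) : Prop :=
  v ∈ S ∧ {w ∈ S | ¬ G.Ancestor v w}.Finite

/-- The set of generators of `S`. -/
def gen (G : InfiniteBiosphere V) (S : Set V) : Set V :=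
  {v : V | G.IsGenerator S v}

/-- `S` is connected as a subgraph of `G`, ignoring edge directions. -/
def ConnectedSet (G : InfiniteBiosphere V) (S : Set V) : Prop :=
  ∀ a ∈ S, ∀ b ∈ S,
    Relation.ReflTransGen (fun x y => (G.Edge x y ∨ G.Edge y x) ∧ x ∈ S ∧ y ∈ S) a b

/-- A specieslike cluster: a connected set satisfying the identical ancestor
point axiom and the convexity axiom. -/
def SpecieslikeCluster (G : InfiniteBiosphere V) (S : Set V) : Prop :=
  G.ConnectedSet S ∧ G.IAP S ∧ G.Convex S

/-- The common ancestor property: some `v ∈ S` is an ancestor of every other member of `S`. -/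
def CommonAncestorProp (G : InfiniteBiosphere V) (S : Set V) : Prop :=
  ∃ v ∈ S, ∀ w ∈ S, w ≠ v → G.Ancestor v w

/-- The reflection property: every member of `S` with infinitely many
descendants in `G` has infinitely many descendants in `S`. -/
def ReflectionProp (G : InfiniteBiosphere V) (S : Set V) : Prop :=
  ∀ v ∈ S, {w : V | G.Ancestor v w}.Infinite → {w ∈ S | G.Ancestor v w}.Infinite

end InfiniteBiosphere

/-- `T` is upward generic: the union of any ascending chain of nonempty sets
from `T`, indexed by a nonempty linear order, is in `T`. -/
def UpwardGeneric {V : Type} (T : Set (Set V)) : Prop :=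
  ∀ (X : Type) [LinearOrder X] [Nonempty X] (C : X → Set V),
    (∀ a b : X, a < b → C a ⊆ C b) →
    (∀ a : X, (C a).Nonempty) →
    (∀ a : X, C a ∈ T) →
    (⋃ a : X, C a) ∈ T

/-- `T` is downward generic: the intersection of any descending chain of
nonempty sets from `T`, indexed by a nonempty linear order, is in `T`. -/
def DownwardGeneric {V : Type} (T : Set (Set V)) : Prop :=
  ∀ (X : Type) [LinearOrder X] [Nonempty X] (C : X → Set V),
    (∀ a b : X, a < b → C b ⊆ C a) →
    (∀ a : X, (C a).Nonempty) →
    (∀ a : X, C a ∈ T) →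
    (⋂ a : X, C a) ∈ T


/-- An `IAP ∩ CONV ∩ CA ∩ REF`-maximal set: a nonempty set satisfying the
identical ancestor point axiom, the convexity axiom, the common ancestor
property, and the reflection property, no proper superset of which satisfies
all four conditions. -/
def IAPConvCaRefMaximal {V : Type} (G : InfiniteBiosphere V) (S : Set V) : Prop :=
  S.Nonempty ∧
    G.IAP S ∧ G.Convex S ∧ G.CommonAncestorProp S ∧ G.ReflectionProp S ∧
    ∀ S' : Set V, S ⊂ S' →
      ¬ (G.IAP S' ∧ G.Convex S' ∧ G.CommonAncestorProp S' ∧ G.ReflectionProp S')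

namespace SpeciesAux
open InfiniteBiosphere
variable {V : Type} (G : InfiniteBiosphere V)

/-- descendants cone -/
def cone (z : V) : Set V := {x | G.Ancestor z x}

variable {G}

lemma anc_t {a b : V} (h : G.Ancestor a b) : G.t a < G.t b := by
  induction h with
  | single h => exact G.edge_t _ _ h
  | tail _ h ih => exact lt_trans ih (G.edge_t _ _ h)

lemma anc_trans {a b c : V} (h1 : G.Ancestor a b) (h2 : G.Ancestor b c) : G.Ancestor a c :=
  Relation.TransGen.trans h1 h2

lemma anc_irrefl {a : V} : ¬ G.Ancestor a a := fun h => lt_irrefl _ (anc_t h)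

lemma anc_ne {a b : V} (h : G.Ancestor a b) : a ≠ b := by
  rintro rfl; exact anc_irrefl h

lemma finite_anc (z : V) : {y : V | G.Ancestor y z}.Finite :=
  (G.finite_early (G.t z)).subset (fun y hy => anc_t hy)

/-- step/pigeonhole: if infinitely many elements of W are descendants of p, then p has a child q
with infinitely many elements of W being descendants of q. -/
lemma cone_step {W : Set V} {p : V} (h : (cone G p ∩ W).Infinite) :
    ∃ q, G.Edge p q ∧ (cone G q ∩ W).Infinite := by
  by_contra hc
  push_neg at hc
  have hsub : cone G p ∩ W ⊆ ⋃ q ∈ {w : V | G.Edge p w}, (insert q (cone G q) ∩ W) := by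
    rintro x ⟨hx, hxW⟩
    obtain ⟨q, hq, hqx⟩ := Relation.TransGen.head'_iff.mp hx
    refine Set.mem_biUnion hq ⟨?_, hxW⟩
    rcases Relation.reflTransGen_iff_eq_or_transGen.mp hqx with h | h
    · exact h ▸ Set.mem_insert _ _
    · exact Set.mem_insert_of_mem _ h
  have hfin : (⋃ q ∈ {w : V | G.Edge p w}, (insert q (cone G q) ∩ W)).Finite := by
    refine (G.finite_children p).biUnion (fun q hq => ?_)
    have h1 : (cone G q ∩ W).Finite := hc q hq
    have : insert q (cone G q) ∩ W ⊆ insert q (cone G q ∩ W) := by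
      rintro x ⟨hx, hxW⟩
      rcases hx with rfl | hx
      · exact Set.mem_insert _ _
      · exact Set.mem_insert_of_mem _ ⟨hx, hxW⟩
    exact (h1.insert q).subset this
  exact h (hfin.subset hsub)

/-- build an infinite descending path inside W-cones -/
lemma exists_seq {W : Set V} {p0 : V} (h0 : (cone G p0 ∩ W).Infinite) :
    ∃ p : ℕ → V, p 0 = p0 ∧ (∀ k, G.Edge (p k) (p (k+1))) ∧
      (∀ k, (cone G (p k) ∩ W).Infinite) := by
  classical
  let T := {x : V // (cone G x ∩ W).Infinite}
  have step : ∀ x : T, ∃ y : T, G.Edge x.1 y.1 := by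
    rintro ⟨x, hx⟩
    obtain ⟨q, hq, hq2⟩ := cone_step hx
    exact ⟨⟨q, hq2⟩, hq⟩
  choose f hf using step
  let p : ℕ → T := fun k => f^[k] ⟨p0, h0⟩
  refine ⟨fun k => (p k).1, rfl, fun k => ?_, fun k => (p k).2⟩
  have h1 : p (k+1) = f (p k) := Function.iterate_succ_apply' f k _
  show G.Edge (p k).1 (p (k+1)).1
  rw [h1]; exact hf _

lemma seq_anc {p : ℕ → V} (hp : ∀ k, G.Edge (p k) (p (k+1))) :
    ∀ k l, k < l → G.Ancestor (p k) (p l) := by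
  intro k l
  induction l with
  | zero => omega
  | succ n ih =>
    intro hkl
    rcases Nat.lt_succ_iff_lt_or_eq.mp hkl with h | h
    · exact (ih h).tail (hp n)
    · subst h; exact Relation.TransGen.single (hp k)

lemma seq_injective {p : ℕ → V} (hp : ∀ k, G.Edge (p k) (p (k+1))) :
    Function.Injective p := by
  have hm : StrictMono (fun k => G.t (p k)) :=
    strictMono_nat_of_lt_succ (fun n => G.edge_t _ _ (hp n))
  intro a b hab
  exact hm.injective (show G.t (p a) = G.t (p b) by rw [hab])

lemma seq_range_infinite {p : ℕ → V} (hp : ∀ k, G.Edge (p k) (p (k+1))) :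
    (Set.range p).Infinite :=
  Set.infinite_range_of_injective (seq_injective hp)

/-- a decreasing (wrt i) family of nonempty subsets of a fixed finite set has a common element -/
lemma common_of_decreasing {F : Set V} (hF : F.Finite) (Gs : ℕ → Set V)
    (hsub : ∀ i, Gs i ⊆ F) (hdec : ∀ i j, i ≤ j → Gs j ⊆ Gs i)
    (hne : ∀ i, (Gs i).Nonempty) : ∃ q, ∀ i, q ∈ Gs i := by
  classical
  choose g hg using hne
  have hrange : (Set.range g).Finite := hF.subset (by rintro x ⟨i, rfl⟩; exact hsub i (hg i))
  have : ∃ q ∈ Set.range g, {i : ℕ | g i = q}.Infinite := by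
    by_contra hcon
    push_neg at hcon
    have : (Set.univ : Set ℕ).Finite := by
      have : (Set.univ : Set ℕ) ⊆ ⋃ q ∈ Set.range g, {i | g i = q} := by
        intro i _; exact Set.mem_biUnion ⟨i, rfl⟩ rfl
      refine Set.Finite.subset (hrange.biUnion (fun q hq => ?_)) this
      exact hcon q hq
    exact Set.infinite_univ this
  obtain ⟨q, _, hq⟩ := this
  refine ⟨q, fun i => ?_⟩
  obtain ⟨j, hj, hji⟩ := hq.exists_gt i
  exact hdec i j (le_of_lt hji) (hj ▸ hg j)

end SpeciesAux

namespace SpeciesAux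
open InfiniteBiosphere
variable {V : Type} (G : InfiniteBiosphere V) (v : V)

/-- ambient set: v and its descendants having infinitely many descendants -/
def Aset : Set V := {z | (z = v ∨ G.Ancestor v z) ∧ (cone G z).Infinite}

/-- relative (to the ambient set) weak ancestors of z -/
def dset (z : V) : Set V := {y | y ∈ Aset G v ∧ (y = z ∨ G.Ancestor y z)}

def Good (W : Set V) : Prop :=
  W ⊆ Aset G v ∧ W.Infinite ∧ (∀ z ∈ W, dset G v z ⊆ W) ∧ (∀ z ∈ W, (cone G z ∩ W).Infinite)

def lightIn (W : Set V) (u : V) : Prop := (W \ cone G u).Finite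

def heavies (W : Set V) : Set V := {u | u ∈ W ∧ ¬ lightIn G W u}

variable {G v}

lemma dset_finite (z : V) : (dset G v z).Finite := by
  refine (((finite_anc (G := G) z).insert z).subset ?_)
  rintro y ⟨_, h | h⟩
  · exact h ▸ Set.mem_insert _ _
  · exact Set.mem_insert_of_mem _ h

lemma mem_A_v {w : V} (hw : w ∈ Aset G v) : v ∈ Aset G v := by
  rcases hw with ⟨h1, h2⟩
  rcases h1 with rfl | h1
  · exact ⟨Or.inl rfl, h2⟩
  · exact ⟨Or.inl rfl, (h2.mono (fun x hx => anc_trans h1 hx))⟩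

lemma v_mem_of_DC {W : Set V} (hsub : W ⊆ Aset G v) (hDC : ∀ z ∈ W, dset G v z ⊆ W)
    (hne : W.Nonempty) : v ∈ W := by
  obtain ⟨w, hw⟩ := hne
  have hwA := hsub hw
  have hvA : v ∈ Aset G v := mem_A_v hwA
  have : v = w ∨ G.Ancestor v w := by
    rcases hwA.1 with h | h
    · exact Or.inl h.symm
    · exact Or.inr h
  exact hDC w hw ⟨hvA, this⟩

lemma light_v {W : Set V} (hsub : W ⊆ Aset G v) : lightIn G W v := by
  refine (Set.finite_singleton v).subset ?_
  rintro x ⟨hxW, hx⟩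
  rcases (hsub hxW).1 with h | h
  · exact h ▸ rfl
  · exact absurd h hx

/-- light elements are never (weak) descendants of heavy ones -/
lemma light_not_above {W : Set V} {u w : V} (hu : lightIn G W u)
    (hw : ¬ lightIn G W w) (h : w = u ∨ G.Ancestor w u) : False := by
  rcases h with rfl | h
  · exact hw hu
  · refine hw (hu.subset ?_)
    rintro x ⟨hxW, hx⟩
    refine ⟨hxW, fun hc => hx (anc_trans h hc)⟩

lemma light_mono {W W' : Set V} (h : W' ⊆ W) {u : V} (hu : lightIn G W u) :
    lightIn G W' u := hu.subset (fun x hx => ⟨h hx.1, hx.2⟩)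

/-- viability of the ambient set -/
lemma cone_inter_A_infinite {z : V} (hz : z ∈ Aset G v) : (cone G z ∩ Aset G v).Infinite := by
  have h0 : (cone G z ∩ (Set.univ : Set V)).Infinite := by
    simpa using hz.2
  obtain ⟨p, hp0, hpe, hpi⟩ := exists_seq h0
  have hanc : ∀ k, G.Ancestor z (p (k+1)) := by
    intro k
    have := seq_anc hpe 0 (k+1) (Nat.succ_pos k)
    rwa [hp0] at this
  have hmem : ∀ k, p (k+1) ∈ cone G z ∩ Aset G v := by
    intro k
    refine ⟨hanc k, ⟨?_, by simpa using hpi (k+1)⟩⟩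
    rcases hz.1 with rfl | h
    · exact Or.inr (hanc k)
    · exact Or.inr (anc_trans h (hanc k))
  have hinj : Function.Injective (fun k => p (k+1)) := by
    intro a b hab
    have := seq_injective hpe hab
    omega
  exact Set.infinite_of_injective_forall_mem hinj hmem

lemma good_A (hv : (cone G v).Infinite) : Good G v (Aset G v) := by
  have hvA : v ∈ Aset G v := ⟨Or.inl rfl, hv⟩
  refine ⟨fun x hx => hx, ?_, fun z _ y hy => hy.1, fun z hz => cone_inter_A_infinite hz⟩
  exact (cone_inter_A_infinite hvA).mono Set.inter_subset_right

/-- The surgery step: removing a heavy element while keeping all light ones. -/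
lemma step_lemma {W : Set V} (hG : Good G v W) {ws : V} (hw : ws ∈ heavies G W) :
    ∃ W', Good G v W' ∧ W' ⊆ W ∧ ws ∉ W' ∧ (∀ u ∈ W, lightIn G W u → u ∈ W') := by
  classical
  obtain ⟨hsub, hinf, hDC, hvia⟩ := hG
  set X := W \ insert ws (cone G ws) with hX
  have hXsub : X ⊆ W := Set.diff_subset
  have hXinf : X.Infinite := by
    have h1 : (W \ cone G ws).Infinite := hw.2
    have : (W \ cone G ws) \ {ws} ⊆ X := by
      rintro x ⟨⟨hxW, hx1⟩, hx2⟩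
      refine ⟨hxW, ?_⟩
      rintro (rfl | h)
      · exact hx2 rfl
      · exact hx1 h
    exact ((h1.diff (Set.finite_singleton ws)).mono this)
  have hXDC : ∀ z ∈ X, dset G v z ⊆ X := by
    rintro z ⟨hzW, hz2⟩ y hy
    refine ⟨hDC z hzW hy, ?_⟩
    rintro (rfl | h)
    · rcases hy.2 with rfl | h'
      · exact hz2 (Set.mem_insert _ _)
      · exact hz2 (Set.mem_insert_of_mem _ h')
    · rcases hy.2 with rfl | h'
      · exact hz2 (Set.mem_insert_of_mem _ h)
      · exact hz2 (Set.mem_insert_of_mem _ (anc_trans h h'))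
  have hvX : v ∈ X := by
    have hvW : v ∈ W := v_mem_of_DC hsub hDC hinf.nonempty
    refine ⟨hvW, ?_⟩
    rintro (rfl | h)
    · exact hw.2 (light_v hsub)
    · rcases (hsub hw.1).1 with rfl | h'
      · exact anc_irrefl h
      · exact anc_irrefl (anc_trans h h')
  have hconevX : (cone G v ∩ X).Infinite := by
    refine hXinf.diff (Set.finite_singleton v) |>.mono ?_
    rintro x ⟨hxX, hxv⟩
    rcases (hsub (hXsub hxX)).1 with rfl | h
    · exact absurd rfl hxv
    · exact ⟨h, hxX⟩
  obtain ⟨p, hp0, hpe, hpi⟩ := exists_seq hconevX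
  -- membership of the path in X
  have hpA : ∀ k, p k ∈ Aset G v := by
    intro k
    rcases Nat.eq_zero_or_pos k with rfl | hk
    · rw [hp0]; exact mem_A_v (hsub hw.1)
    · have hanc : G.Ancestor v (p k) := by
        have := seq_anc hpe 0 k hk; rwa [hp0] at this
      refine ⟨Or.inr hanc, ?_⟩
      exact ((hpi k).mono Set.inter_subset_left)
  have hpX : ∀ k, p k ∈ X := by
    intro k
    rcases Nat.eq_zero_or_pos k with rfl | hk
    · rw [hp0]; exact hvX
    · obtain ⟨x, hx1, hx2⟩ := (hpi k).nonempty
      exact hXDC x hx2 ⟨hpA k, Or.inr hx1⟩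
  set PC := ⋃ k, dset G v (p k) with hPC
  have hPCX : PC ⊆ X := by
    rintro y hy
    obtain ⟨k, hk⟩ := Set.mem_iUnion.mp hy
    exact hXDC (p k) (hpX k) hk
  have hrangePC : ∀ k, p k ∈ PC := by
    intro k
    exact Set.mem_iUnion.mpr ⟨k, ⟨hpA k, Or.inl rfl⟩⟩
  have hPCinf : PC.Infinite := by
    refine Set.infinite_of_injective_forall_mem (seq_injective hpe) hrangePC
  set L := {u | u ∈ X ∧ lightIn G W u} with hL
  refine ⟨PC ∪ L, ?_, ?_, ?_, ?_⟩
  · -- Goodness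
    have hsub' : PC ∪ L ⊆ X := by
      rintro y (hy | hy)
      · exact hPCX hy
      · exact hy.1
    refine ⟨fun y hy => hsub (hXsub (hsub' hy)), hPCinf.mono Set.subset_union_left, ?_, ?_⟩
    · -- DC
      rintro z (hz | hz) y hy
      · obtain ⟨k, hk⟩ := Set.mem_iUnion.mp hz
        refine Or.inl (Set.mem_iUnion.mpr ⟨k, ⟨hy.1, ?_⟩⟩)
        rcases hy.2 with rfl | h1
        · exact hk.2
        · rcases hk.2 with rfl | h2
          · exact Or.inr h1
          · exact Or.inr (anc_trans h1 h2)
      · refine Or.inr ⟨hXDC z hz.1 hy, ?_⟩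
        refine hz.2.subset ?_
        rintro x ⟨hxW, hx⟩
        refine ⟨hxW, fun hc => hx ?_⟩
        rcases hy.2 with rfl | h1
        · exact hc
        · exact anc_trans h1 hc
    · -- viability
      rintro z (hz | hz)
      · obtain ⟨k, hk⟩ := Set.mem_iUnion.mp hz
        have hmem : ∀ l, p (k+1+l) ∈ cone G z ∩ (PC ∪ L) := by
          intro l
          have h1 : G.Ancestor (p k) (p (k+1+l)) := seq_anc hpe k (k+1+l) (by omega)
          refine ⟨?_, Or.inl (hrangePC _)⟩
          rcases hk.2 with rfl | h2
          · exact h1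
          · exact anc_trans h2 h1
        have hinj : Function.Injective (fun l => p (k+1+l)) := by
          intro a b hab
          have := seq_injective hpe hab
          omega
        exact Set.infinite_of_injective_forall_mem hinj hmem
      · have h1 : PC \ (W \ cone G z) ⊆ cone G z ∩ (PC ∪ L) := by
          rintro x ⟨hx1, hx2⟩
          have hxW : x ∈ W := hXsub (hPCX hx1)
          refine ⟨?_, Or.inl hx1⟩
          by_contra hc
          exact hx2 ⟨hxW, hc⟩
        exact (hPCinf.diff hz.2).mono h1
  · intro y hy
    rcases hy with hy | hy
    · exact hXsub (hPCX hy)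
    · exact hXsub hy.1
  · rintro (h | h)
    · exact (hPCX h).2 (Set.mem_insert _ _)
    · exact h.1.2 (Set.mem_insert _ _)
  · intro u huW hu
    refine Or.inr ⟨⟨huW, ?_⟩, hu⟩
    rintro (rfl | h)
    · exact hw.2 hu
    · exact light_not_above hu hw.2 (Or.inr h)

end SpeciesAux

namespace SpeciesAux
open InfiniteBiosphere
variable {V : Type} {G : InfiniteBiosphere V} {v : V}

lemma exists_next {W : Set V} (hG : Good G v W) (hne : (heavies G W).Nonempty) :
    ∃ W', Good G v W' ∧ W' ⊆ W ∧ (∀ u ∈ W, lightIn G W u → u ∈ W') ∧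
      ∃ ws, ws ∈ heavies G W ∧ (∀ u ∈ heavies G W, G.t ws ≤ G.t u) ∧ ws ∉ W' := by
  obtain ⟨h0, hh0⟩ := hne
  have hFfin : (heavies G W ∩ {y | G.t y < G.t h0 + 1}).Finite :=
    (G.finite_early _).subset Set.inter_subset_right
  have hFne : (heavies G W ∩ {y | G.t y < G.t h0 + 1}).Nonempty :=
    ⟨h0, hh0, by simp⟩
  obtain ⟨ws, hws, hmin⟩ := Set.exists_min_image _ G.t hFfin hFne
  obtain ⟨W', a, b, c, d⟩ := step_lemma hG hws.1
  refine ⟨W', a, b, d, ws, hws.1, ?_, c⟩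
  intro u hu
  by_cases h : G.t u < G.t h0 + 1
  · exact hmin u ⟨hu, h⟩
  · have h2 := hmin h0 ⟨hh0, by simp⟩
    push_neg at h
    linarith

variable (G v)

noncomputable def nextW (W : Set V) : Set V :=
  @dite _ (Good G v W ∧ (heavies G W).Nonempty) (Classical.propDecidable _)
    (fun h => (exists_next h.1 h.2).choose) (fun _ => W)

noncomputable def Wseq (k : ℕ) : Set V := (nextW G v)^[k] (Aset G v)

variable {G v}

lemma Wseq_zero : Wseq G v 0 = Aset G v := rfl

lemma Wseq_succ (k : ℕ) : Wseq G v (k+1) = nextW G v (Wseq G v k) :=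
  Function.iterate_succ_apply' _ _ _

lemma nextW_spec {W : Set V} (h : Good G v W ∧ (heavies G W).Nonempty) :
    Good G v (nextW G v W) ∧ nextW G v W ⊆ W ∧
      (∀ u ∈ W, lightIn G W u → u ∈ nextW G v W) ∧
      ∃ ws, ws ∈ heavies G W ∧ (∀ u ∈ heavies G W, G.t ws ≤ G.t u) ∧ ws ∉ nextW G v W := by
  rw [nextW, dif_pos h]
  exact (exists_next h.1 h.2).choose_spec

lemma good_Wseq (hv : (cone G v).Infinite) (k : ℕ) : Good G v (Wseq G v k) := by
  induction k with
  | zero => exact good_A hv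
  | succ n ih =>
    rw [Wseq_succ]
    by_cases h : (heavies G (Wseq G v n)).Nonempty
    · exact (nextW_spec ⟨ih, h⟩).1
    · rw [nextW, dif_neg (by tauto)]; exact ih

lemma Wseq_succ_subset (hv : (cone G v).Infinite) (k : ℕ) :
    Wseq G v (k+1) ⊆ Wseq G v k := by
  rw [Wseq_succ]
  by_cases h : (heavies G (Wseq G v k)).Nonempty
  · exact (nextW_spec ⟨good_Wseq hv k, h⟩).2.1
  · rw [nextW, dif_neg (by tauto)]

lemma Wseq_mono (hv : (cone G v).Infinite) {i j : ℕ} (hij : i ≤ j) :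
    Wseq G v j ⊆ Wseq G v i := by
  induction j with
  | zero => have : i = 0 := by omega
            subst this; exact fun x h => h
  | succ n ih =>
    rcases Nat.lt_succ_iff_lt_or_eq.mp (Nat.lt_succ_of_le hij) with h | h
    · exact (Wseq_succ_subset hv n).trans (ih (by omega))
    · subst h; exact fun x h => h

lemma light_step (hv : (cone G v).Infinite) {k : ℕ} {u : V} (hu : u ∈ Wseq G v k)
    (hl : lightIn G (Wseq G v k) u) : u ∈ Wseq G v (k+1) ∧ lightIn G (Wseq G v (k+1)) u := by
  have hsub := Wseq_succ_subset hv k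
  refine ⟨?_, light_mono hsub hl⟩
  rw [Wseq_succ]
  by_cases h : (heavies G (Wseq G v k)).Nonempty
  · exact (nextW_spec ⟨good_Wseq hv k, h⟩).2.2.1 u hu hl
  · rw [nextW, dif_neg (by tauto)]; exact hu

lemma light_forever (hv : (cone G v).Infinite) {i j : ℕ} (hij : i ≤ j) {u : V}
    (hu : u ∈ Wseq G v i) (hl : lightIn G (Wseq G v i) u) :
    u ∈ Wseq G v j ∧ lightIn G (Wseq G v j) u := by
  induction j with
  | zero => have : i = 0 := by omega
            subst this; exact ⟨hu, hl⟩
  | succ n ih =>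
    rcases Nat.lt_succ_iff_lt_or_eq.mp (Nat.lt_succ_of_le hij) with h | h
    · obtain ⟨h1, h2⟩ := ih (by omega)
      exact light_step hv h1 h2
    · subst h; exact ⟨hu, hl⟩

variable (G v)

noncomputable def FinalSet : Set V := ⋂ k, Wseq G v k

variable {G v}

lemma eventually_light (hv : (cone G v).Infinite) {u : V} (hu : u ∈ FinalSet G v) :
    ∃ i, lightIn G (Wseq G v i) u := by
  by_contra hcon
  push_neg at hcon
  have hmem : ∀ i, u ∈ heavies G (Wseq G v i) :=
    fun i => ⟨Set.mem_iInter.mp hu i, hcon i⟩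
  have hstep : ∀ i : ℕ, ∃ ws, ws ∈ heavies G (Wseq G v i) ∧
      (∀ x ∈ heavies G (Wseq G v i), G.t ws ≤ G.t x) ∧ ws ∉ Wseq G v (i+1) := by
    intro i
    have h := nextW_spec ⟨good_Wseq hv i, ⟨u, hmem i⟩⟩
    obtain ⟨ws, h1, h2, h3⟩ := h.2.2.2
    exact ⟨ws, h1, h2, by rw [Wseq_succ]; exact h3⟩
  choose w hw1 hw2 hw3 using hstep
  have hinj : Function.Injective w := by
    intro a b hab
    by_contra hne
    rcases Nat.lt_or_ge a b with h | h
    · exact hw3 a (hab ▸ (Wseq_mono hv (by omega : a + 1 ≤ b) ((hw1 b).1)))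
    · have hba : b < a := by omega
      exact hw3 b (hab ▸ (Wseq_mono hv (by omega : b + 1 ≤ a) ((hw1 a).1)))
  have hsub2 : ∀ i, w i ∈ {y | G.t y < G.t u + 1} := by
    intro i
    have := hw2 i u (hmem i)
    simp only [Set.mem_setOf_eq]
    linarith
  have hfin : (Set.range w).Finite :=
    (G.finite_early (G.t u + 1)).subset (by rintro x ⟨i, rfl⟩; exact hsub2 i)
  exact (Set.infinite_range_of_injective hinj) hfin

lemma v_mem_Wseq (hv : (cone G v).Infinite) (i : ℕ) : v ∈ Wseq G v i := by
  obtain ⟨hsub, hinf, hDC, _⟩ := good_Wseq hv i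
  exact v_mem_of_DC hsub hDC hinf.nonempty

lemma final_infinite (hv : (cone G v).Infinite) : (FinalSet G v).Infinite := by
  classical
  let T := {c : V // (∀ i, (cone G c ∩ Wseq G v i).Infinite) ∧ (c = v ∨ G.Ancestor v c)}
  have hbase : (∀ i, (cone G v ∩ Wseq G v i).Infinite) ∧ (v = v ∨ G.Ancestor v v) := by
    refine ⟨fun i => ?_, Or.inl rfl⟩
    exact (good_Wseq hv i).2.2.2 v (v_mem_Wseq hv i)
  have hstep : ∀ c : T, ∃ q : T, G.Edge c.1 q.1 := by
    rintro ⟨c, hc1, hc2⟩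
    have hGs : ∀ i, {q | G.Edge c q ∧ (cone G q ∩ Wseq G v i).Infinite}.Nonempty := by
      intro i
      obtain ⟨q, hq1, hq2⟩ := cone_step (hc1 i)
      exact ⟨q, hq1, hq2⟩
    obtain ⟨q, hq⟩ := common_of_decreasing (G.finite_children c)
      (fun i => {q | G.Edge c q ∧ (cone G q ∩ Wseq G v i).Infinite})
      (fun i x hx => hx.1)
      (fun i j hij x hx => ⟨hx.1, fun hfin => hx.2 (hfin.subset
        (Set.inter_subset_inter_right _ (Wseq_mono hv hij)))⟩)
      hGs
    have hanc : G.Ancestor v q := by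
      rcases hc2 with rfl | h
      · exact Relation.TransGen.single (hq 0).1
      · exact h.tail (hq 0).1
    exact ⟨⟨q, fun i => (hq i).2, Or.inr hanc⟩, (hq 0).1⟩
  choose f hf using hstep
  let c : ℕ → T := fun k => f^[k] ⟨v, hbase⟩
  have hedge : ∀ k, G.Edge (c k).1 (c (k+1)).1 := by
    intro k
    have h1 : c (k+1) = f (c k) := Function.iterate_succ_apply' f k _
    show G.Edge (c k).1 (c (k+1)).1
    rw [h1]; exact hf _
  have hmemW : ∀ k i, (c k).1 ∈ Wseq G v i := by
    intro k i
    rcases Nat.eq_zero_or_pos k with rfl | hk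
    · exact v_mem_Wseq hv i
    · obtain ⟨x, hx1, hx2⟩ := ((c k).2.1 i).nonempty
      have hA : (c k).1 ∈ Aset G v := ⟨(c k).2.2, ((c k).2.1 i).mono Set.inter_subset_left⟩
      exact (good_Wseq hv i).2.2.1 x hx2 ⟨hA, Or.inr hx1⟩
  have hinj : Function.Injective (fun k => (c k).1) := seq_injective hedge
  refine Set.infinite_of_injective_forall_mem hinj (fun k => ?_)
  exact Set.mem_iInter.mpr (fun i => hmemW k i)

/-- The base cluster in the infinite-cone case. -/
theorem base_infinite (hv : (cone G v).Infinite) :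
    ∃ S : Set V, v ∈ S ∧ G.IAP S ∧ G.Convex S ∧ G.CommonAncestorProp S ∧ G.ReflectionProp S := by
  classical
  set S := FinalSet G v with hS
  have hsubA : S ⊆ Aset G v := by
    intro x hx
    exact (good_Wseq hv 0).1 (Set.mem_iInter.mp hx 0)
  have hvS : v ∈ S := Set.mem_iInter.mpr (fun i => v_mem_Wseq hv i)
  have hSinf : S.Infinite := final_infinite hv
  have hres : ∀ u ∈ S, (S \ cone G u).Finite := by
    intro u hu
    obtain ⟨i, hi⟩ := eventually_light hv hu
    refine hi.subset ?_
    rintro x ⟨hx1, hx2⟩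
    exact ⟨Set.mem_iInter.mp hx1 i, hx2⟩
  have hDC : ∀ z ∈ S, dset G v z ⊆ S := by
    intro z hz y hy
    exact Set.mem_iInter.mpr (fun i => (good_Wseq hv i).2.2.1 z (Set.mem_iInter.mp hz i) hy)
  refine ⟨S, hvS, ?_, ?_, ?_, ?_⟩
  · -- IAP
    intro u hu
    left
    refine (hres u hu).subset ?_
    rintro x ⟨hx1, hx2⟩
    exact ⟨hx1, hx2⟩
  · -- Convex
    rintro x ⟨a, ha, hax⟩ ⟨d, hd, hxd⟩
    have hxA : x ∈ Aset G v := by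
      constructor
      · rcases (hsubA ha).1 with rfl | h
        · exact Or.inr hax
        · exact Or.inr (anc_trans h hax)
      · refine ((hsubA hd).2.mono (fun y hy => anc_trans hxd hy))
    exact hDC d hd ⟨hxA, Or.inr hxd⟩
  · -- CommonAncestorProp
    refine ⟨v, hvS, fun w hw hne => ?_⟩
    rcases (hsubA hw).1 with rfl | h
    · exact absurd rfl hne
    · exact h
  · -- ReflectionProp
    intro u hu _
    have h1 : S \ (S \ cone G u) ⊆ {w | w ∈ S ∧ G.Ancestor u w} := by
      rintro x ⟨hx1, hx2⟩
      refine ⟨hx1, ?_⟩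
      by_contra hc
      exact hx2 ⟨hx1, hc⟩
    exact (hSinf.diff (hres u hu)).mono h1

/-- The base cluster in general. -/
theorem base_exists (G : InfiniteBiosphere V) (v : V) :
    ∃ S : Set V, v ∈ S ∧ G.IAP S ∧ G.Convex S ∧ G.CommonAncestorProp S ∧ G.ReflectionProp S := by
  classical
  by_cases hv : (cone G v).Infinite
  · exact base_infinite hv
  · have hfin : (cone G v).Finite := Set.not_infinite.mp hv
    set S := insert v (cone G v) with hS
    have hSfin : S.Finite := hfin.insert v
    refine ⟨S, Set.mem_insert _ _, ?_, ?_, ?_, ?_⟩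
    · intro u hu
      right
      exact hSfin.subset (fun x hx => hx.1)
    · rintro x ⟨a, ha, hax⟩ ⟨d, hd, hxd⟩
      rcases ha with rfl | ha
      · exact Set.mem_insert_of_mem _ hax
      · exact Set.mem_insert_of_mem _ (anc_trans ha hax)
    · refine ⟨v, Set.mem_insert _ _, fun w hw hne => ?_⟩
      rcases hw with rfl | hw
      · exact absurd rfl hne
      · exact hw
    · intro u hu hinf
      exfalso
      rcases hu with rfl | hu
      · exact hinf hfin
      · exact hinf (hfin.subset (fun y hy => anc_trans hu hy))

end SpeciesAux

namespace SpeciesAux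
open InfiniteBiosphere
variable {V : Type} {G : InfiniteBiosphere V}

/-- the four target properties -/
def TProps (G : InfiniteBiosphere V) (S : Set V) : Prop :=
  G.IAP S ∧ G.Convex S ∧ G.CommonAncestorProp S ∧ G.ReflectionProp S

lemma dom_lemma {C : Set V} (hT : TProps G C) {x : V} (hx : x ∈ C)
    (hcone : (cone G x).Infinite) : {w | w ∈ C ∧ ¬ G.Ancestor x w}.Finite := by
  have h1 := hT.2.2.2 x hx hcone
  rcases hT.1 x hx with h | h
  · exact h
  · exact absurd h (by exact fun hf => h1 hf)

lemma exists_stable_ca {C : ℕ → Set V} (hmono : ∀ i j, i ≤ j → C i ⊆ C j)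
    (hT : ∀ i, TProps G (C i)) :
    ∃ N : ℕ, ∃ c : V, ∀ k, N ≤ k → c ∈ C k ∧ ∀ w ∈ C k, w ≠ c → G.Ancestor c w := by
  classical
  have hca : ∀ i, ∃ c ∈ C i, ∀ w ∈ C i, w ≠ c → G.Ancestor c w := fun i => (hT i).2.2.1
  choose c hc1 hc2 using hca
  have hdich : ∀ i j, i ≤ j → c j = c i ∨ G.Ancestor (c j) (c i) := by
    intro i j hij
    by_cases h : c i = c j
    · exact Or.inl h.symm
    · exact Or.inr (hc2 j (c i) (hmono i j hij (hc1 i)) h)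
  have ht : ∀ i, G.t (c i) ≤ G.t (c 0) := by
    intro i
    rcases hdich 0 i (Nat.zero_le i) with h | h
    · rw [h]
    · exact le_of_lt (anc_t h)
  have hrfin : (Set.range c).Finite := by
    refine (G.finite_early (G.t (c 0) + 1)).subset ?_
    rintro x ⟨i, rfl⟩
    have := ht i
    simp only [Set.mem_setOf_eq]
    linarith
  obtain ⟨y, hy, hymin⟩ := Set.exists_min_image _ G.t hrfin ⟨c 0, 0, rfl⟩
  obtain ⟨N, rfl⟩ := hy
  refine ⟨N, c N, fun k hk => ?_⟩
  have heq : c k = c N := by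
    rcases hdich N k hk with h | h
    · exact h
    · exact absurd (anc_t h) (not_lt.mpr (hymin (c k) ⟨k, rfl⟩))
  refine ⟨hmono N k hk (hc1 N), fun w hw hne => ?_⟩
  have := hc2 k w hw (by rw [heq]; exact hne)
  rwa [heq] at this

theorem union_closed {C : ℕ → Set V} (hmono : ∀ i j, i ≤ j → C i ⊆ C j)
    (hT : ∀ i, TProps G (C i)) (hne : (C 0).Nonempty) : TProps G (⋃ i, C i) := by
  classical
  set S := ⋃ i, C i with hSdef
  have hmem : ∀ x ∈ S, ∃ i, x ∈ C i := fun x hx => Set.mem_iUnion.mp hx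
  have hsub : ∀ i, C i ⊆ S := fun i => Set.subset_iUnion C i
  obtain ⟨N, c, hNc⟩ := exists_stable_ca hmono hT
  have hconv : G.Convex S := by
    rintro x ⟨a, ha, hax⟩ ⟨d, hd, hxd⟩
    obtain ⟨i, hi⟩ := hmem a ha
    obtain ⟨j, hj⟩ := hmem d hd
    refine hsub (max i j) ((hT (max i j)).2.1 x ⟨a, hmono i _ (le_max_left i j) hi, hax⟩
      ⟨d, hmono j _ (le_max_right i j) hj, hxd⟩)
  have hca : G.CommonAncestorProp S := by
    refine ⟨c, hsub N (hNc N le_rfl).1, fun w hw hne' => ?_⟩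
    obtain ⟨m, hm⟩ := hmem w hw
    exact (hNc (max m N) (le_max_right m N)).2 w (hmono m _ (le_max_left m N) hm) hne'
  have href : G.ReflectionProp S := by
    intro u hu hinf
    obtain ⟨i, hi⟩ := hmem u hu
    refine ((hT i).2.2.2 u hi hinf).mono ?_
    rintro x ⟨hx1, hx2⟩
    exact ⟨hsub i hx1, hx2⟩
  refine ⟨?_, hconv, hca, href⟩
  -- IAP
  intro u hu
  by_cases hD : {w | w ∈ S ∧ G.Ancestor u w}.Finite
  · right; exact hD
  · left
    by_contra hN'
    have hNinf : {w | w ∈ S ∧ ¬ G.Ancestor u w}.Infinite := hN'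
    have hDinf : {w | w ∈ S ∧ G.Ancestor u w}.Infinite := hD
    set N' := {w | w ∈ S ∧ ¬ G.Ancestor u w} with hN'def
    obtain ⟨n0, hn0⟩ := hmem u hu
    set N1 := max N n0 with hN1def
    have huN1 : u ∈ C N1 := hmono n0 N1 (le_max_right _ _) hn0
    have hconeu : (cone G u).Infinite := by
      refine hDinf.mono ?_
      rintro x ⟨_, hx⟩
      exact hx
    -- stable common ancestor facts at k ≥ N1
    have hcfacts : ∀ k, N1 ≤ k → c ∈ C k ∧ ∀ w ∈ C k, w ≠ c → G.Ancestor c w :=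
      fun k hk => hNc k (le_trans (le_max_left _ _) hk)
    -- the branching set P
    set P := {p : V | (p = c ∨ G.Ancestor c p) ∧ (cone G p ∩ N').Infinite} with hPdef
    have hcP : c ∈ P := by
      refine ⟨Or.inl rfl, ?_⟩
      refine (hNinf.diff (Set.finite_singleton c)).mono ?_
      rintro x ⟨hx1, hx2⟩
      obtain ⟨m, hm⟩ := hmem x hx1.1
      have hxk : x ∈ C (max m N1) := hmono m _ (le_max_left _ _) hm
      refine ⟨(hcfacts (max m N1) (le_max_right _ _)).2 x hxk ?_, hx1⟩
      intro h; exact hx2 (h ▸ rfl)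
    have hPstep : ∀ p : {p // p ∈ P}, ∃ q : {p // p ∈ P}, G.Edge p.1 q.1 := by
      rintro ⟨p, hp1, hp2⟩
      obtain ⟨q, hq1, hq2⟩ := cone_step hp2
      refine ⟨⟨q, ⟨?_, hq2⟩⟩, hq1⟩
      rcases hp1 with rfl | h
      · exact Or.inr (Relation.TransGen.single hq1)
      · exact Or.inr (h.tail hq1)
    choose f hf using hPstep
    let us : ℕ → {p // p ∈ P} := fun k => f^[k] ⟨c, hcP⟩
    have hedge : ∀ k, G.Edge (us k).1 (us (k+1)).1 := by
      intro k
      have h1 : us (k+1) = f (us k) := Function.iterate_succ_apply' f k _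
      show G.Edge (us k).1 (us (k+1)).1
      rw [h1]; exact hf _
    have hu0 : (us 0).1 = c := rfl
    have hanc_c : ∀ k, 1 ≤ k → G.Ancestor c ((us k).1) := by
      intro k hk
      have := seq_anc hedge 0 k hk
      rwa [hu0] at this
    have hnotanc : ∀ k, ¬ G.Ancestor u ((us k).1) := by
      intro k hcontra
      obtain ⟨x, hx1, hx2⟩ := ((us k).2.2).nonempty
      exact hx2.2 (anc_trans hcontra hx1)
    -- each us k (k ≥ 1) is in every C m for m ≥ N1
    have hmemCm : ∀ k, 1 ≤ k → ∀ m, N1 ≤ m → (us k).1 ∈ C m := by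
      intro k hk
      -- first: us k belongs to SOME C mk with N1 ≤ mk
      have hsome : ∃ mk, N1 ≤ mk ∧ (us k).1 ∈ C mk := by
        obtain ⟨x, hx1, hx2⟩ := ((us k).2.2).nonempty
        obtain ⟨m'', hm''⟩ := hmem x hx2.1
        set mk := max m'' N1 with hmk
        refine ⟨mk, le_max_right _ _, ?_⟩
        refine (hT mk).2.1 (us k).1 ⟨c, (hcfacts mk (le_max_right _ _)).1, hanc_c k hk⟩
          ⟨x, hmono m'' mk (le_max_left _ _) hm'', hx1⟩
      obtain ⟨mk, hmk1, hmk2⟩ := hsome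
      intro m hm
      -- descendants of u inside C m
      have hDm : {w | w ∈ C m ∧ G.Ancestor u w}.Infinite :=
        (hT m).2.2.2 u (hmono n0 m (le_trans (le_max_right N n0) hm) hn0) hconeu
      -- us k dominates C (max m mk)
      have hconeusk : (cone G (us k).1).Infinite := ((us k).2.2).mono Set.inter_subset_left
      have hdom : {w | w ∈ C (max m mk) ∧ ¬ G.Ancestor (us k).1 w}.Finite :=
        dom_lemma (hT (max m mk)) (hmono mk _ (le_max_right _ _) hmk2) hconeusk
      have : ({w | w ∈ C m ∧ G.Ancestor u w} \
          {w | w ∈ C (max m mk) ∧ ¬ G.Ancestor (us k).1 w}).Nonempty :=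
        (hDm.diff hdom).nonempty
      obtain ⟨y, hy1, hy2⟩ := this
      have hy3 : G.Ancestor (us k).1 y := by
        by_contra hcy
        exact hy2 ⟨hmono m _ (le_max_left _ _) hy1.1, hcy⟩
      exact (hT m).2.1 (us k).1
        ⟨c, (hcfacts m hm).1, hanc_c k hk⟩ ⟨y, hy1.1, hy3⟩
    -- contradiction: infinitely many distinct non-descendants of u in C N1
    have hFfin : {w | w ∈ C N1 ∧ ¬ G.Ancestor u w}.Finite :=
      dom_lemma (hT N1) huN1 hconeu
    have hinj : Function.Injective (fun k : ℕ => (us (k+1)).1) := by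
      intro a b hab
      have := seq_injective hedge hab
      omega
    have hmemF : ∀ k : ℕ, (us (k+1)).1 ∈ {w | w ∈ C N1 ∧ ¬ G.Ancestor u w} := by
      intro k
      exact ⟨hmemCm (k+1) (by omega) N1 le_rfl, hnotanc (k+1)⟩
    exact (Set.infinite_of_injective_forall_mem hinj hmemF) hFfin

end SpeciesAux

namespace SpeciesAux
open InfiniteBiosphere
variable {V : Type} {G : InfiniteBiosphere V}

lemma countable_V (G : InfiniteBiosphere V) : Countable V := by
  have h : (Set.univ : Set V).Countable := by
    have hsub : (Set.univ : Set V) ⊆ ⋃ n : ℕ, {x | G.t x < n} := by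
      intro x _
      obtain ⟨n, hn⟩ := exists_nat_gt (G.t x)
      exact Set.mem_iUnion.mpr ⟨n, hn⟩
    exact Set.Countable.mono hsub (Set.countable_iUnion (fun n : ℕ => (G.finite_early (n : ℝ)).countable))
  exact Set.countable_univ_iff.mp h

variable (G)

noncomputable def greedy (S0 : Set V) (e : ℕ → V) : ℕ → Set V :=
  fun n => Nat.rec S0 (fun n Sn =>
    @dite _ (∃ S', TProps G S' ∧ Sn ∪ {e n} ⊆ S') (Classical.propDecidable _)
      (fun h => h.choose) (fun _ => Sn)) n

variable {G}

lemma greedy_succ (S0 : Set V) (e : ℕ → V) (n : ℕ) :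
    greedy G S0 e (n+1) =
      @dite _ (∃ S', TProps G S' ∧ greedy G S0 e n ∪ {e n} ⊆ S') (Classical.propDecidable _)
        (fun h => h.choose) (fun _ => greedy G S0 e n) := rfl

lemma greedy_subset_succ (S0 : Set V) (e : ℕ → V) (n : ℕ) :
    greedy G S0 e n ⊆ greedy G S0 e (n+1) := by
  rw [greedy_succ]
  by_cases h : ∃ S', TProps G S' ∧ greedy G S0 e n ∪ {e n} ⊆ S'
  · rw [dif_pos h]
    exact (Set.union_subset_iff.mp h.choose_spec.2).1
  · rw [dif_neg h]

lemma greedy_mono (S0 : Set V) (e : ℕ → V) {i j : ℕ} (hij : i ≤ j) :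
    greedy G S0 e i ⊆ greedy G S0 e j := by
  induction j with
  | zero => have : i = 0 := by omega
            subst this; exact fun x h => h
  | succ n ih =>
    rcases Nat.lt_succ_iff_lt_or_eq.mp (Nat.lt_succ_of_le hij) with h | h
    · exact (ih (by omega)).trans (greedy_subset_succ S0 e n)
    · subst h; exact fun x h => h

lemma greedy_TProps {S0 : Set V} (h0 : TProps G S0) (e : ℕ → V) (n : ℕ) :
    TProps G (greedy G S0 e n) := by
  induction n with
  | zero => exact h0
  | succ n ih =>
    rw [greedy_succ]
    by_cases h : ∃ S', TProps G S' ∧ greedy G S0 e n ∪ {e n} ⊆ S'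
    · rw [dif_pos h]; exact h.choose_spec.1
    · rw [dif_neg h]; exact ih

theorem main_theorem (G : InfiniteBiosphere V) (v : V) :
    ∃ S : Set V, (S.Nonempty ∧ TProps G S ∧
      ∀ S' : Set V, S ⊂ S' → ¬ TProps G S') ∧ v ∈ S := by
  classical
  haveI : Infinite V := G.infinite_verts
  haveI : Countable V := countable_V G
  obtain ⟨e, he⟩ := exists_surjective_nat V
  obtain ⟨S0, hvS0, h1, h2, h3, h4⟩ := base_exists G v
  have h0 : TProps G S0 := ⟨h1, h2, h3, h4⟩
  set M := ⋃ n, greedy G S0 e n with hM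
  have hvM : v ∈ M := Set.mem_iUnion.mpr ⟨0, hvS0⟩
  have hMT : TProps G M :=
    union_closed (fun i j hij => greedy_mono S0 e hij) (fun n => greedy_TProps h0 e n) ⟨v, hvS0⟩
  refine ⟨M, ⟨⟨v, hvM⟩, hMT, ?_⟩, hvM⟩
  intro S' hss hT'
  obtain ⟨x, hxS', hxM⟩ := Set.exists_of_ssubset hss
  obtain ⟨n, rfl⟩ := he x
  have hcond : ∃ S'', TProps G S'' ∧ greedy G S0 e n ∪ {e n} ⊆ S'' := by
    refine ⟨S', hT', Set.union_subset ?_ ?_⟩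
    · exact (Set.subset_iUnion (greedy G S0 e) n).trans hss.subset
    · simpa using hxS'
  have : e n ∈ greedy G S0 e (n+1) := by
    rw [greedy_succ, dif_pos hcond]
    exact hcond.choose_spec.2 (Set.mem_union_right _ rfl)
  exact hxM (Set.mem_iUnion.mpr ⟨n+1, this⟩)

end SpeciesAux


/-- Every organism inhabits an `IAP ∩ CONV ∩ CA ∩ REF`-maximal set. -/
theorem exists_maximal_specieslike_cluster {V : Type} (G : InfiniteBiosphere V)
    (v : V) : ∃ S : Set V, IAPConvCaRefMaximal G S ∧ v ∈ S := by
  obtain ⟨S, ⟨hne, ⟨h1, h2, h3, h4⟩, hmax⟩, hv⟩ := SpeciesAux.main_theorem G v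
  exact ⟨S, ⟨hne, h1, h2, h3, h4,
    fun S' hss hT' => hmax S' hss ⟨hT'.1, hT'.2.1, hT'.2.2.1, hT'.2.2.2⟩⟩, hv⟩
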